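/- Let L ≥ 2, let S be dense in ℝ/Lℤ, and let G be a g.e.c. graph with unit threshold on S. A finite set U ⊆ S is contained in an open arc of length 2 (i.e., U ⊆ (v−1, v+1) for some v ∈ S) if and only if there exists a vertex w ∈ S adjacent in G to every vertex of U. -/

import Mathlib

/-- Geometric existential closure for a graph on a subset `S` of the circle. -/
def IsGEC {L : ℝ} {S : Set (AddCircle L)} (G : SimpleGraph S) : Prop :=
  ∀ (s : S) (A B : Finset S), Disjoint A B →
    (∀ a ∈ A, dist (a : AddCircle L) (s : AddCircle L) < 1) →
    (∀ b ∈ B, dist (b : AddCircle L) (s : AddCircle L) < 1) →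
    ∀ ε : ℝ, 0 < ε →
      ∃ v : S, v ∉ A ∧ v ∉ B ∧ (∀ a ∈ A, G.Adj v a) ∧ (∀ b ∈ B, ¬ G.Adj v b) ∧
        dist (v : AddCircle L) (s : AddCircle L) < ε

/-- Adjacent vertices are at circle distance less than 1. -/
def HasUnitThreshold {L : ℝ} {S : Set (AddCircle L)} (G : SimpleGraph S) : Prop :=
  ∀ u v : S, G.Adj u v → dist (u : AddCircle L) (v : AddCircle L) < 1

/-- A finite set `U ⊆ S` lies in an open arc of length 2 centered at some `v ∈ S` iff some
vertex `w` of the g.e.c. unit-threshold graph `G` is adjacent to every element of `U`. -/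
theorem stmt_8 (L : ℝ) (hL : 2 ≤ L) (S : Set (AddCircle L)) (hSdense : Dense S)
    (G : SimpleGraph S) (hgec : IsGEC G) (hut : HasUnitThreshold G)
    (U : Finset S) :
    (∃ v : S, ∀ u ∈ U, dist (u : AddCircle L) (v : AddCircle L) < 1) ↔
      (∃ w : S, ∀ u ∈ U, G.Adj w u) := by
  constructor
  · rintro ⟨v, hv⟩
    obtain ⟨w, -, -, hadj, -, -⟩ := hgec v U ∅ (Finset.disjoint_empty_right _)
      hv (by simp) 1 one_pos
    exact ⟨w, hadj⟩
  · rintro ⟨w, hw⟩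
    exact ⟨w, fun u hu => hut u w (G.adj_symm (hw u hu))⟩
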